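/- For every H ∈ (1/2, 1), the determinant D_2^*(H) := (1 + ρ_2)(1 + ρ_4) − (ρ_1 + ρ_3)² is strictly positive, where ρ_k = ρ_k(H). -/

import Mathlib

open Real Set Finset

/-- Autocovariance function of fractional Gaussian noise with Hurst parameter `H`:
`ρ_k(H) = ((k+1)^{2H} − 2·k^{2H} + (k−1)^{2H})/2` for `k ≥ 1`, and `ρ_0(H) = 1`. -/
noncomputable def rho (H : ℝ) (k : ℕ) : ℝ :=
  if k = 0 then 1
  else (((k : ℝ) + 1) ^ (2 * H) - 2 * (k : ℝ) ^ (2 * H) + ((k : ℝ) - 1) ^ (2 * H)) / 2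

/-- Second difference of `t ↦ t^p` with unit spacing. -/
noncomputable def sd2 (p t : ℝ) : ℝ := (t + 2) ^ p - 2 * (t + 1) ^ p + t ^ p

/-- For negative exponents, the second difference is positive (midpoint convexity via AM-GM). -/
lemma sd2_pos_of_neg {p t : ℝ} (hp : p < 0) (ht : 0 < t) : 0 < sd2 p t := by
  have h1 : (0:ℝ) < t + 1 := by linarith
  have h2 : (0:ℝ) < t + 2 := by linarith
  have hu : (0:ℝ) < t ^ (p/2) := Real.rpow_pos_of_pos ht _
  have hv : (0:ℝ) < (t+2) ^ (p/2) := Real.rpow_pos_of_pos h2 _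
  have key : (t+1) ^ p < t ^ (p/2) * (t+2) ^ (p/2) := by
    have hlt : t * (t+2) < (t+1) ^ 2 := by nlinarith
    have hstep := Real.rpow_lt_rpow_of_neg (by positivity : (0:ℝ) < t * (t+2)) hlt
      (by linarith : p/2 < 0)
    have e : ((t+1) ^ 2 : ℝ) ^ (p/2) = (t+1) ^ p := by
      rw [← Real.rpow_natCast (t+1) 2, ← Real.rpow_mul h1.le]
      norm_num
      congr 1
      ring
    rw [← e, ← Real.mul_rpow ht.le h2.le]
    exact hstep
  have hsq1 : t ^ (p/2) * t ^ (p/2) = t ^ p := by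
    rw [← Real.rpow_add ht]; ring_nf
  have hsq2 : (t+2) ^ (p/2) * (t+2) ^ (p/2) = (t+2) ^ p := by
    rw [← Real.rpow_add h2]; ring_nf
  have amgm : 2 * (t ^ (p/2) * (t+2) ^ (p/2)) ≤ t ^ p + (t+2) ^ p := by
    nlinarith [sq_nonneg (t ^ (p/2) - (t+2) ^ (p/2))]
  unfold sd2; nlinarith

/-- For exponents in `(0,1)`, the second difference is negative (strict concavity). -/
lemma sd2_neg_of_lt_one {p t : ℝ} (hp0 : 0 < p) (hp1 : p < 1) (ht : 0 ≤ t) :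
    sd2 p t < 0 := by
  have h := (Real.strictConcaveOn_rpow hp0 hp1).2 (Set.mem_Ici.2 ht)
    (Set.mem_Ici.2 (by linarith : (0:ℝ) ≤ t + 2)) (by norm_num)
    (by norm_num : (0:ℝ) < 1/2) (by norm_num : (0:ℝ) < 1/2) (by norm_num)
  simp only [smul_eq_mul] at h
  have : (1/2 : ℝ) * t + 1/2 * (t + 2) = t + 1 := by ring
  rw [this] at h
  unfold sd2; linarith

/-- For exponents `> 1`, the second difference is positive (strict convexity). -/
lemma sd2_pos_of_one_lt {p t : ℝ} (hp : 1 < p) (ht : 0 ≤ t) : 0 < sd2 p t := by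
  have h := (strictConvexOn_rpow hp).2 (Set.mem_Ici.2 ht)
    (Set.mem_Ici.2 (by linarith : (0:ℝ) ≤ t + 2)) (by norm_num)
    (by norm_num : (0:ℝ) < 1/2) (by norm_num : (0:ℝ) < 1/2) (by norm_num)
  simp only [smul_eq_mul] at h
  have : (1/2 : ℝ) * t + 1/2 * (t + 2) = t + 1 := by ring
  rw [this] at h
  unfold sd2; linarith

lemma hasDerivAt_sd2 {p t : ℝ} (ht : 0 < t) :
    HasDerivAt (sd2 p) (p * sd2 (p - 1) t) t := by
  have d1 : HasDerivAt (fun s : ℝ => (s + 2) ^ p) (1 * p * (t + 2) ^ (p - 1)) t :=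
    ((hasDerivAt_id t).add_const 2).rpow_const (Or.inl (by simp only [id_eq]; positivity))
  have d2 : HasDerivAt (fun s : ℝ => (s + 1) ^ p) (1 * p * (t + 1) ^ (p - 1)) t :=
    ((hasDerivAt_id t).add_const 1).rpow_const (Or.inl (by simp only [id_eq]; positivity))
  have d3 : HasDerivAt (fun s : ℝ => s ^ p) (1 * p * t ^ (p - 1)) t :=
    (hasDerivAt_id t).rpow_const (Or.inl (by simp only [id_eq]; positivity))
  have := (d1.sub (d2.const_mul 2)).add d3
  exact this.congr_deriv (by unfold sd2; ring)

lemma continuousOn_sd2 {p : ℝ} (hp : 0 ≤ p) : ContinuousOn (sd2 p) (Set.Ici 0) :=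
  (((Real.continuous_rpow_const hp).comp (continuous_id.add continuous_const)).sub
    (continuous_const.mul ((Real.continuous_rpow_const hp).comp
      (continuous_id.add continuous_const)))).add
    (Real.continuous_rpow_const hp) |>.continuousOn

/-- For `1 < p < 2`, the second difference is strictly decreasing on `[0,∞)`. -/
lemma sd2_strictAntiOn {p : ℝ} (hp1 : 1 < p) (hp2 : p < 2) :
    StrictAntiOn (sd2 p) (Set.Ici 0) := by
  apply strictAntiOn_of_deriv_neg (convex_Ici 0) (continuousOn_sd2 (by linarith))
  intro t ht
  rw [interior_Ici] at ht
  rw [(hasDerivAt_sd2 ht).deriv]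
  have := sd2_neg_of_lt_one (by linarith : 0 < p - 1) (by linarith : p - 1 < 1) ht.le
  nlinarith

/-- For `1 < p < 2`, the second difference is strictly convex on `[0,∞)`. -/
lemma sd2_strictConvexOn {p : ℝ} (hp1 : 1 < p) (hp2 : p < 2) :
    StrictConvexOn ℝ (Set.Ici 0) (sd2 p) := by
  have hmono : StrictMonoOn (sd2 (p - 1)) (Set.Ici 0) := by
    apply strictMonoOn_of_deriv_pos (convex_Ici 0) (continuousOn_sd2 (by linarith))
    intro t ht
    rw [interior_Ici] at ht
    rw [(hasDerivAt_sd2 ht).deriv]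
    have := sd2_pos_of_neg (by linarith : p - 1 - 1 < 0) ht
    nlinarith
  apply StrictMonoOn.strictConvexOn_of_deriv (convex_Ici 0)
    (continuousOn_sd2 (by linarith))
  intro s hs t ht hst
  rw [interior_Ici] at hs ht
  rw [(hasDerivAt_sd2 hs).deriv, (hasDerivAt_sd2 ht).deriv]
  exact (mul_lt_mul_iff_right₀ (by linarith : (0:ℝ) < p)).2 (hmono (Set.mem_Ici.2 (Set.mem_Ioi.1 hs).le) (Set.mem_Ici.2 (Set.mem_Ioi.1 ht).le) hst)

lemma core_alg (a b d : ℝ) (h2 : a < 4)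
    (h3 : 2*a < b + 1) (h4 : 2*b < a^2 + a) (h6 : b < 3*a - 3)
    (h7 : a^2 + 3*a < 3*b + 1) (h9 : 4*a^2 + 4*a < d + 6*b + 1) :
    (a^2 - 2*b + 2*a - 2)^2 < (b - 2*a + 3) * (d - 2*a^2 + b + 2) := by
  nlinarith [sq_nonneg (a-4), sq_nonneg (b-9), sq_nonneg (d-25),
    sq_nonneg (a^2-2*b+2*a-2), sq_nonneg (b-3*a+3),
    mul_pos (sub_pos.2 h6) (sub_pos.2 h6), sq_nonneg (a*a - b - a + 1)]

theorem stmt_7 (H : ℝ) (hH : H ∈ Ioo (1 / 2 : ℝ) 1) :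
    0 < (1 + rho H 2) * (1 + rho H 4) - (rho H 1 + rho H 3) ^ 2 := by
  obtain ⟨hH1, hH2⟩ := hH
  set x : ℝ := 2 * H with hx
  have hx1 : 1 < x := by simp [hx]; linarith
  have hx2 : x < 2 := by simp [hx]; linarith
  set a : ℝ := (2:ℝ) ^ x with ha
  set b : ℝ := (3:ℝ) ^ x with hb
  set d : ℝ := (5:ℝ) ^ x with hd
  have hfour : (4:ℝ) ^ x = a ^ 2 := by
    rw [show (4:ℝ) = 2 * 2 by norm_num, Real.mul_rpow (by norm_num) (by norm_num)]
    ring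
  -- evaluate the sd2 values
  have e0 : sd2 x 0 = a - 2 := by
    unfold sd2
    rw [Real.zero_rpow (by linarith : x ≠ 0)]
    norm_num [ha]
  have e1 : sd2 x 1 = b - 2 * a + 1 := by
    unfold sd2; norm_num [ha, hb]
  have e2 : sd2 x 2 = a ^ 2 - 2 * b + a := by
    unfold sd2; norm_num [ha, hb, hfour]
  have e3 : sd2 x 3 = d - 2 * a ^ 2 + b := by
    unfold sd2
    norm_num [ha, hb, hd, hfour]
  -- the nine inequalities
  have h1 : 2 < a := by
    calc (2:ℝ) = 2 ^ (1:ℝ) := (Real.rpow_one 2).symm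
    _ < a := Real.rpow_lt_rpow_of_exponent_lt (by norm_num) hx1
  have h2 : a < 4 := by
    have e4 : (2:ℝ) ^ (2:ℝ) = 4 := by
      have h := Real.rpow_add (by norm_num : (0:ℝ) < 2) 1 1
      norm_num [Real.rpow_one] at h
      linarith
    calc a < 2 ^ (2:ℝ) := Real.rpow_lt_rpow_of_exponent_lt (by norm_num) hx2
    _ = 4 := e4
  have h3 : 2 * a < b + 1 := by
    linarith [e1 ▸ sd2_pos_of_one_lt hx1 (by norm_num : (0:ℝ) ≤ 1)]
  have h4 : 2 * b < a ^ 2 + a := by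
    linarith [e2 ▸ sd2_pos_of_one_lt hx1 (by norm_num : (0:ℝ) ≤ 2)]
  have h5 : 2 * a ^ 2 < b + d := by
    linarith [e3 ▸ sd2_pos_of_one_lt hx1 (by norm_num : (0:ℝ) ≤ 3)]
  have hanti := sd2_strictAntiOn hx1 hx2
  have h6 : b < 3 * a - 3 := by
    have := hanti (Set.mem_Ici.2 (by norm_num : (0:ℝ) ≤ 0))
      (Set.mem_Ici.2 (by norm_num : (0:ℝ) ≤ 1)) (by norm_num)
    rw [e0, e1] at this; linarith
  have h7 : a ^ 2 + 3 * a < 3 * b + 1 := by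
    have := hanti (Set.mem_Ici.2 (by norm_num : (0:ℝ) ≤ 1))
      (Set.mem_Ici.2 (by norm_num : (0:ℝ) ≤ 2)) (by norm_num)
    rw [e1, e2] at this; linarith
  have h8 : d < 3 * a ^ 2 - 3 * b + a := by
    have := hanti (Set.mem_Ici.2 (by norm_num : (0:ℝ) ≤ 2))
      (Set.mem_Ici.2 (by norm_num : (0:ℝ) ≤ 3)) (by norm_num)
    rw [e2, e3] at this; linarith
  have h9 : 4 * a ^ 2 + 4 * a < d + 6 * b + 1 := by
    have := (sd2_strictConvexOn hx1 hx2).2 (Set.mem_Ici.2 (by norm_num : (0:ℝ) ≤ 1))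
      (Set.mem_Ici.2 (by norm_num : (0:ℝ) ≤ 3)) (by norm_num)
      (by norm_num : (0:ℝ) < 1/2) (by norm_num : (0:ℝ) < 1/2) (by norm_num)
    simp only [smul_eq_mul] at this
    rw [show (1/2 : ℝ) * 1 + 1/2 * 3 = 2 by norm_num] at this
    rw [e1, e2, e3] at this; linarith
  -- the algebraic core
  have core := core_alg a b d h2 h3 h4 h6 h7 h9
  -- unfold rho and conclude
  have r1 : rho H 1 = (a - 2) / 2 := by
    simp only [rho, if_neg (by norm_num : (1:ℕ) ≠ 0)]
    push_cast
    rw [show ((1:ℝ) - 1) = 0 by norm_num, Real.zero_rpow (by linarith : 2 * H ≠ 0),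
      Real.one_rpow, show (1:ℝ) + 1 = 2 by norm_num, ← hx]
    ring
  have r2 : rho H 2 = (b - 2 * a + 1) / 2 := by
    simp only [rho, if_neg (by norm_num : (2:ℕ) ≠ 0)]
    push_cast
    rw [show ((2:ℝ) + 1) = 3 by norm_num, show ((2:ℝ) - 1) = 1 by norm_num,
      Real.one_rpow, ← hx]
  have r3 : rho H 3 = (a ^ 2 - 2 * b + a) / 2 := by
    simp only [rho, if_neg (by norm_num : (3:ℕ) ≠ 0)]
    push_cast
    rw [show ((3:ℝ) + 1) = 4 by norm_num, show ((3:ℝ) - 1) = 2 by norm_num, ← hx, hfour]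
  have r4 : rho H 4 = (d - 2 * a ^ 2 + b) / 2 := by
    simp only [rho, if_neg (by norm_num : (4:ℕ) ≠ 0)]
    push_cast
    rw [show ((4:ℝ) + 1) = 5 by norm_num, show ((4:ℝ) - 1) = 3 by norm_num, ← hx, hfour]
  rw [r1, r2, r3, r4]
  have expand : (1 + (b - 2*a + 1)/2) * (1 + (d - 2*a^2 + b)/2)
      - ((a - 2)/2 + (a^2 - 2*b + a)/2)^2
      = ((b - 2*a + 3) * (d - 2*a^2 + b + 2) - (a^2 - 2*b + 2*a - 2)^2)/4 := by ring
  rw [expand]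
  linarith
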